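/- For n ≥ 2 and any field F, the homogeneous space SL_n(F)/SL_{n-1}(F) has diameter at most 2/n with respect to the quotient of the normalized rank metric. Concretely: for every g ∈ SL_n(F) there exists h ∈ SL_{n-1}(F) (embedded as the stabilizer of the last basis vector eₙ) such that rank(hg - 1) ≤ 2, i.e., d(hg, 1) ≤ 2/n. -/

import Mathlib

open Matrix Polynomial

section Aux

variable {F : Type*} [Field F] {p q : Type*} [Fintype p] [Fintype q] [DecidableEq p]

variable {F : Type*} [Field F] {p : Type*} [Fintype p] [DecidableEq p]

private lemma det_add_vecMulVec_of_ne (A : Matrix p p F) (hA : A.det ≠ 0) (u v : p → F) :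
    (A + vecMulVec u v).det = A.det + v ⬝ᵥ (A.adjugate *ᵥ u) := by
  have hU : IsUnit A.det := isUnit_iff_ne_zero.mpr hA
  have h0 : A + vecMulVec u v = A * (1 + replicateCol (Fin 1) (A⁻¹ *ᵥ u) * replicateRow (Fin 1) v) := by
    rw [Matrix.mul_add, Matrix.mul_one, replicateCol_mulVec, ← Matrix.mul_assoc,
      Matrix.mul_nonsing_inv_cancel_left _ _ hU, vecMulVec_eq (Fin 1)]
    rfl
  erw [h0, det_mul, det_one_add_replicateCol_mul_replicateRow, Matrix.inv_def, Ring.inverse_eq_inv']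
  have h2 : v ⬝ᵥ ((A.det⁻¹ • A.adjugate) *ᵥ u) = A.det⁻¹ * (v ⬝ᵥ (A.adjugate *ᵥ u)) := by
    rw [Matrix.smul_mulVec, dotProduct_smul]; rfl
  rw [h2]
  field_simp

omit [DecidableEq p] in
private lemma blockEntry (C' : Matrix (Fin 1) p F) (M : Matrix p p F) (B : Matrix p (Fin 1) F) :
    (C' * M * B) 0 0 = (fun j => C' 0 j) ⬝ᵥ (M *ᵥ fun i => B i 0) := by
  simp only [Matrix.mul_apply, Matrix.mulVec, dotProduct, Finset.sum_mul, Finset.mul_sum,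
    mul_assoc]
  exact Finset.sum_comm

private lemma det_fromBlocks_one_of_ne (A : Matrix p p F) (B : Matrix p (Fin 1) F)
    (C' : Matrix (Fin 1) p F) (D : Matrix (Fin 1) (Fin 1) F) (hA : A.det ≠ 0) :
    (fromBlocks A B C' D).det
      = D 0 0 * A.det - (fun j => C' 0 j) ⬝ᵥ (A.adjugate *ᵥ fun i => B i 0) := by
  have hU : IsUnit A.det := isUnit_iff_ne_zero.mpr hA
  have : Invertible A := A.invertibleOfIsUnitDet hU
  rw [det_fromBlocks₁₁, det_fin_one (D - C' * ⅟A * B), Matrix.sub_apply, invOf_eq_nonsing_inv,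
    blockEntry, Matrix.inv_def, Ring.inverse_eq_inv']
  have h2 : ((A.det⁻¹ • A.adjugate) *ᵥ fun i => B i 0) = A.det⁻¹ • (A.adjugate *ᵥ fun i => B i 0) :=
    Matrix.smul_mulVec _ _ _
  rw [h2, dotProduct_smul, smul_eq_mul]
  field_simp

section transfer
variable {R S : Type*} [CommRing R] [CommRing S] (f : R →+* S)

private lemma map_adj_mulVec (M : Matrix p p R) (u : p → R) :
    f ∘ (M.adjugate *ᵥ u) = (M.map f).adjugate *ᵥ (f ∘ u) := by
  funext i
  rw [Function.comp_apply, RingHom.map_mulVec]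
  have := f.map_adjugate M
  rw [RingHom.mapMatrix_apply, RingHom.mapMatrix_apply] at this
  rw [this]

private lemma map_lhs1 (M : Matrix p p R) (u v : p → R) :
    f ((M + vecMulVec u v).det) = (M.map f + vecMulVec (f ∘ u) (f ∘ v)).det := by
  rw [RingHom.map_det]
  congr 1
  ext i j
  simp [Matrix.map_apply, vecMulVec_apply]

private lemma map_rhs1 (M : Matrix p p R) (u v : p → R) :
    f (M.det + v ⬝ᵥ (M.adjugate *ᵥ u))
      = (M.map f).det + (f ∘ v) ⬝ᵥ ((M.map f).adjugate *ᵥ (f ∘ u)) := by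
  rw [map_add, RingHom.map_det, RingHom.map_dotProduct, RingHom.mapMatrix_apply,
    map_adj_mulVec f M u]

private lemma map_lhs2 (A : Matrix p p R) (B : Matrix p (Fin 1) R)
    (C' : Matrix (Fin 1) p R) (D : Matrix (Fin 1) (Fin 1) R) :
    f ((fromBlocks A B C' D).det)
      = (fromBlocks (A.map f) (B.map f) (C'.map f) (D.map f)).det := by
  rw [RingHom.map_det, RingHom.mapMatrix_apply, fromBlocks_map]

private lemma map_rhs2 (A : Matrix p p R) (B : Matrix p (Fin 1) R)
    (C' : Matrix (Fin 1) p R) (D : Matrix (Fin 1) (Fin 1) R) :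
    f (D 0 0 * A.det - (fun j => C' 0 j) ⬝ᵥ (A.adjugate *ᵥ fun i => B i 0))
      = (D.map f) 0 0 * (A.map f).det
        - (fun j => (C'.map f) 0 j) ⬝ᵥ ((A.map f).adjugate *ᵥ fun i => (B.map f) i 0) := by
  rw [map_sub, _root_.map_mul, RingHom.map_det, RingHom.map_dotProduct, RingHom.mapMatrix_apply]
  have h1 : f ∘ (fun j => C' 0 j) = fun j => (C'.map f) 0 j := rfl
  have h2 : f ∘ (fun i => B i 0) = fun i => (B.map f) i 0 := rfl
  rw [map_adj_mulVec f A, h1, h2]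
  rfl

end transfer

private lemma det_Ap_ne_zero (A : Matrix p p F) :
    (A.map (C : F →+* F[X]) + diagonal fun _ => (X : F[X])).det ≠ 0 := by
  have h : A.map (C : F →+* F[X]) + diagonal (fun _ => (X : F[X])) = charmatrix (-A) := by
    ext i j
    by_cases hij : i = j
    · subst hij; rw [charmatrix_apply_eq]
      simp [Matrix.map_apply]
      ring
    · rw [charmatrix_apply_ne _ _ _ hij]
      simp [Matrix.map_apply, diagonal_apply_ne _ hij]
  rw [h]
  exact ((-A).charpoly_monic).ne_zero

private lemma evalMatrix (A : Matrix p p F) :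
    (A.map (C : F →+* F[X]) + diagonal fun _ => (X : F[X])).map (evalRingHom (0 : F)) = A := by
  ext i j
  by_cases hij : i = j
  · subst hij; simp [Matrix.map_apply]
  · simp [Matrix.map_apply, diagonal_apply_ne _ hij]

private lemma comp_evalC (u : p → F) : (evalRingHom (0 : F)) ∘ ((C : F →+* F[X]) ∘ u) = u := by
  funext i; simp

/-- The matrix determinant lemma, general version. -/
private lemma det_add_vecMulVec (A : Matrix p p F) (u v : p → F) :
    (A + vecMulVec u v).det = A.det + v ⬝ᵥ (A.adjugate *ᵥ u) := by
  classical
  set K := FractionRing F[X]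
  let φ : F[X] →+* K := algebraMap F[X] K
  set Ap : Matrix p p F[X] := A.map (C : F →+* F[X]) + diagonal fun _ => (X : F[X]) with hApdef
  have hAp : Ap.det ≠ 0 := det_Ap_ne_zero A
  have hApK : (Ap.map φ).det ≠ 0 := by
    rw [← RingHom.mapMatrix_apply, ← RingHom.map_det]
    intro hc
    exact hAp (IsFractionRing.injective F[X] K (by rw [hc, map_zero]))
  have hK := det_add_vecMulVec_of_ne (Ap.map φ) hApK (φ ∘ ((C : F →+* F[X]) ∘ u))
    (φ ∘ ((C : F →+* F[X]) ∘ v))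
  have hR : (Ap + vecMulVec ((C : F →+* F[X]) ∘ u) ((C : F →+* F[X]) ∘ v)).det
      = Ap.det + ((C : F →+* F[X]) ∘ v) ⬝ᵥ (Ap.adjugate *ᵥ ((C : F →+* F[X]) ∘ u)) := by
    apply IsFractionRing.injective F[X] K
    rw [map_lhs1 φ, map_rhs1 φ]
    exact hK
  have hE := congrArg (evalRingHom (0 : F)) hR
  rw [map_lhs1 (evalRingHom (0 : F)), map_rhs1 (evalRingHom (0 : F)), evalMatrix,
    comp_evalC, comp_evalC] at hE
  exact hE

private lemma det_fromBlocks_adj (A : Matrix p p F) (B : Matrix p (Fin 1) F)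
    (C' : Matrix (Fin 1) p F) (D : Matrix (Fin 1) (Fin 1) F) :
    (fromBlocks A B C' D).det
      = D 0 0 * A.det - (fun j => C' 0 j) ⬝ᵥ (A.adjugate *ᵥ fun i => B i 0) := by
  classical
  set K := FractionRing F[X]
  let φ : F[X] →+* K := algebraMap F[X] K
  set Ap : Matrix p p F[X] := A.map (C : F →+* F[X]) + diagonal fun _ => (X : F[X]) with hApdef
  have hAp : Ap.det ≠ 0 := det_Ap_ne_zero A
  have hApK : (Ap.map φ).det ≠ 0 := by
    rw [← RingHom.mapMatrix_apply, ← RingHom.map_det]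
    intro hc
    exact hAp (IsFractionRing.injective F[X] K (by rw [hc, map_zero]))
  have hK := det_fromBlocks_one_of_ne (Ap.map φ) ((B.map (C : F →+* F[X])).map φ)
    ((C'.map (C : F →+* F[X])).map φ) ((D.map (C : F →+* F[X])).map φ) hApK
  have hR : (fromBlocks Ap (B.map (C : F →+* F[X])) (C'.map (C : F →+* F[X]))
        (D.map (C : F →+* F[X]))).det
      = (D.map (C : F →+* F[X])) 0 0 * Ap.det
        - (fun j => (C'.map (C : F →+* F[X])) 0 j)
            ⬝ᵥ (Ap.adjugate *ᵥ fun i => (B.map (C : F →+* F[X])) i 0) := by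
    apply IsFractionRing.injective F[X] K
    rw [map_lhs2 φ, map_rhs2 φ]
    exact hK
  have hE := congrArg (evalRingHom (0 : F)) hR
  rw [map_lhs2 (evalRingHom (0 : F)), map_rhs2 (evalRingHom (0 : F)), evalMatrix] at hE
  rw [Matrix.map_map, Matrix.map_map, Matrix.map_map] at hE
  have hmmB : B.map (⇑(evalRingHom (0 : F)) ∘ ⇑(C : F →+* F[X])) = B := by
    ext i j; simp [Matrix.map_apply]
  have hmmC : C'.map (⇑(evalRingHom (0 : F)) ∘ ⇑(C : F →+* F[X])) = C' := by
    ext i j; simp [Matrix.map_apply]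
  have hmmD : D.map (⇑(evalRingHom (0 : F)) ∘ ⇑(C : F →+* F[X])) = D := by
    ext i j; simp [Matrix.map_apply]
  rw [hmmB, hmmC, hmmD] at hE
  exact hE

private lemma rank_add_le' (A B : Matrix p q F) : (A + B).rank ≤ A.rank + B.rank := by
  simp only [Matrix.rank, mulVecLin_add]
  have hle : LinearMap.range (A.mulVecLin + B.mulVecLin)
      ≤ LinearMap.range A.mulVecLin ⊔ LinearMap.range B.mulVecLin := by
    rintro x ⟨y, rfl⟩
    exact Submodule.mem_sup.mpr ⟨A.mulVecLin y, ⟨y, rfl⟩, B.mulVecLin y, ⟨y, rfl⟩, rfl⟩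
  calc Module.finrank F (LinearMap.range (A + B).mulVecLin)
      = Module.finrank F (LinearMap.range (A.mulVecLin + B.mulVecLin)) := by
        rw [mulVecLin_add]
    _ ≤ Module.finrank F ↥(LinearMap.range A.mulVecLin ⊔ LinearMap.range B.mulVecLin) :=
        Submodule.finrank_mono hle
    _ ≤ _ := Submodule.finrank_add_le_finrank_add_finrank _ _

private lemma rank_vecMulVec_le' (u : p → F) (v : q → F) : (vecMulVec u v).rank ≤ 1 := by
  rw [vecMulVec_eq (Fin 1)]
  calc (replicateCol (Fin 1) u * replicateRow (Fin 1) v).rank ≤ (replicateCol (Fin 1) u).rank := rank_mul_le_left _ _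
    _ ≤ Fintype.card (Fin 1) := rank_le_card_width _
    _ = 1 := by simp

private lemma det_sub_vecMulVec (A : Matrix p p F) (u v : p → F) :
    (A - vecMulVec u v).det = A.det - v ⬝ᵥ (A.adjugate *ᵥ u) := by
  have h : A - vecMulVec u v = A + vecMulVec (-u) v := by
    ext i j; simp [vecMulVec_apply]; ring
  rw [h, det_add_vecMulVec, mulVec_neg, dotProduct_neg, sub_eq_add_neg]

private lemma key_exists {m : ℕ} (A : Matrix (Fin (m+1)) (Fin (m+1)) F)
    (B : Matrix (Fin (m+1)) (Fin 1) F) (C' : Matrix (Fin 1) (Fin (m+1)) F)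
    (D : Matrix (Fin 1) (Fin 1) F) (hdet : (fromBlocks A B C' D).det = 1) :
    ∃ (k : Matrix (Fin (m+1)) (Fin (m+1)) F) (u w : Fin (m+1) → F) (t : F),
      k.det = 1 ∧ A - k = vecMulVec u w ∧ ∀ i, B i 0 = t * u i := by
  set b : Fin (m+1) → F := fun i => B i 0 with hb
  set v : Fin (m+1) → F := A.adjugate *ᵥ b with hv
  by_cases hv0 : v = 0
  · by_cases hδ1 : A.det = 1
    · refine ⟨A, b, 0, 1, hδ1, ?_, fun i => (one_mul _).symm⟩
      ext i j; simp [vecMulVec_apply]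
    · have hδ0 : A.det ≠ 0 := by
        intro h0
        rw [det_fromBlocks_adj, ← hb, ← hv, h0, hv0] at hdet
        simp at hdet
      -- v = 0 and δ ≠ 0 forces b = 0
      have hb0 : b = 0 := by
        have h1 : A *ᵥ v = A.det • b := by
          rw [hv, mulVec_mulVec, mul_adjugate, smul_mulVec, one_mulVec]
        rw [hv0, mulVec_zero] at h1
        have := h1.symm
        funext i
        have h2 := congrFun this i
        simp only [Pi.smul_apply, smul_eq_mul, Pi.zero_apply] at h2
        exact (mul_eq_zero.mp h2).resolve_left hδ0 |>.symm ▸ rfl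
      set u : Fin (m+1) → F := A *ᵥ Pi.single (0 : Fin (m+1)) (1:F) with hu
      set w : Fin (m+1) → F := Pi.single (0 : Fin (m+1)) ((A.det - 1) * A.det⁻¹) with hw
      refine ⟨A - vecMulVec u w, u, w, 0, ?_, by rw [sub_sub_cancel], ?_⟩
      · rw [det_sub_vecMulVec]
        have h3 : A.adjugate *ᵥ u = Pi.single (0 : Fin (m+1)) A.det := by
          rw [hu, mulVec_mulVec, adjugate_mul, smul_mulVec, one_mulVec]
          ext j
          simp [Pi.single_apply]
        rw [h3, hw]
        have h4 : (Pi.single (0 : Fin (m+1)) ((A.det - 1) * A.det⁻¹)) ⬝ᵥ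
            (Pi.single (0 : Fin (m+1)) A.det) = (A.det - 1) * A.det⁻¹ * A.det := by
          simp [dotProduct, Pi.single_apply]
        rw [h4]
        field_simp
        ring
      · intro i
        rw [show B i 0 = b i from rfl, hb0]
        simp
  · -- v ≠ 0
    obtain ⟨i, hi⟩ : ∃ i, v i ≠ 0 := by
      by_contra hc
      push_neg at hc
      exact hv0 (funext hc)
    set w : Fin (m+1) → F := Pi.single i ((A.det - 1) * (v i)⁻¹) with hw
    refine ⟨A - vecMulVec b w, b, w, 1, ?_, by rw [sub_sub_cancel], fun j => (one_mul _).symm⟩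
    rw [det_sub_vecMulVec, ← hv, hw]
    have h4 : (Pi.single i ((A.det - 1) * (v i)⁻¹)) ⬝ᵥ v
        = (A.det - 1) * (v i)⁻¹ * v i := by
      simp [dotProduct, Pi.single_apply, mul_assoc]

    rw [h4]
    field_simp
    ring

end Aux

/-- For `n ≥ 2` and any field `F`, the homogeneous space `SL_n(F)/SL_{n-1}(F)` has
diameter at most `2/n` in the normalized rank metric: for every `g ∈ SL_n(F)` there
is `h` in the copy of `SL_{n-1}(F)` stabilizing the last basis vector (block
diagonal with lower-right entry `1`) such that `rank(hg - 1) ≤ 2`, i.e.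
`d(hg, 1) ≤ 2/n`. -/
theorem sl_quotient_diameter (n : ℕ) (hn : 2 ≤ n) (F : Type) [Field F]
    (g : Matrix.SpecialLinearGroup (Fin n) F) :
    ∃ h : Matrix.SpecialLinearGroup (Fin n) F,
      (∀ i : Fin n, h.val i ⟨n - 1, by omega⟩ =
          if i = ⟨n - 1, by omega⟩ then 1 else 0) ∧
      (∀ j : Fin n, h.val ⟨n - 1, by omega⟩ j =
          if j = ⟨n - 1, by omega⟩ then 1 else 0) ∧
      Matrix.rank ((h * g).val - 1) ≤ 2 ∧
      (Matrix.rank ((h * g).val - 1) : ℝ) / n ≤ 2 / n := by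
  obtain ⟨m, rfl⟩ : ∃ m, n = m + 2 := ⟨n - 2, by omega⟩
  classical
  set e : Fin (m+1) ⊕ Fin 1 ≃ Fin (m+2) := finSumFinEquiv with he
  set N : Fin (m + 2) := ⟨m + 1, by omega⟩ with hNdef
  have heN : e (Sum.inr 0) = N := by
    simp only [he, finSumFinEquiv_apply_right]
    exact Fin.ext (by simp [hNdef])
  have heNs : e.symm N = Sum.inr 0 := by rw [← heN, Equiv.symm_apply_apply]
  set Gb : Matrix (Fin (m+1) ⊕ Fin 1) (Fin (m+1) ⊕ Fin 1) F := g.val.submatrix e e with hGb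
  have hdet : (fromBlocks Gb.toBlocks₁₁ Gb.toBlocks₁₂ Gb.toBlocks₂₁ Gb.toBlocks₂₂).det = 1 := by
    rw [fromBlocks_toBlocks, hGb, det_submatrix_equiv_self]
    exact g.2
  obtain ⟨k, u, w, t, hk1, hk2, hk3⟩ :=
    key_exists Gb.toBlocks₁₁ Gb.toBlocks₁₂ Gb.toBlocks₂₁ Gb.toBlocks₂₂ hdet
  have hkU : IsUnit k.det := by rw [hk1]; exact isUnit_one
  set hM : Matrix (Fin (m+2)) (Fin (m+2)) F :=
    (fromBlocks k⁻¹ 0 0 (1 : Matrix (Fin 1) (Fin 1) F)).submatrix e.symm e.symm with hhM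
  set kM : Matrix (Fin (m+2)) (Fin (m+2)) F :=
    (fromBlocks k 0 0 (1 : Matrix (Fin 1) (Fin 1) F)).submatrix e.symm e.symm with hkM
  have hdethM : hM.det = 1 := by
    rw [hhM, det_submatrix_equiv_self, det_fromBlocks_zero₂₁, det_one, mul_one,
      det_nonsing_inv, hk1, Ring.inverse_one]
  have hmul : hM * kM = 1 := by
    rw [hhM, hkM, submatrix_mul_equiv, fromBlocks_multiply]
    simp only [Matrix.mul_zero, Matrix.zero_mul, add_zero, zero_add, Matrix.mul_one,
      Matrix.one_mul]
    rw [nonsing_inv_mul _ hkU, fromBlocks_one]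
    exact submatrix_one_equiv e.symm
  -- column condition
  have hcol : ∀ i : Fin (m+2), hM i N = if i = N then 1 else 0 := by
    intro i
    rcases hi : e.symm i with a | c
    · have hiN : i ≠ N := by
        intro hcontra
        rw [hcontra, heNs] at hi
        exact Sum.inr_ne_inl hi
      rw [if_neg hiN, hhM]
      rw [submatrix_apply, hi, heNs]
      rfl
    · have hc : c = 0 := Subsingleton.elim _ _
      have hiN : i = N := by
        rw [← heN, ← hc, ← hi, Equiv.apply_symm_apply]
      rw [if_pos hiN, hhM, submatrix_apply, hi, heNs, hc]
      rfl
  have hrow : ∀ j : Fin (m+2), hM N j = if j = N then 1 else 0 := by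
    intro j
    rcases hj : e.symm j with a | c
    · have hjN : j ≠ N := by
        intro hcontra
        rw [hcontra, heNs] at hj
        exact Sum.inr_ne_inl hj
      rw [if_neg hjN, hhM, submatrix_apply, hj, heNs]
      rfl
    · have hc : c = 0 := Subsingleton.elim _ _
      have hjN : j = N := by rw [← heN, ← hc, ← hj, Equiv.apply_symm_apply]
      rw [if_pos hjN, hhM, submatrix_apply, hj, heNs, hc]
      rfl
  -- rank bound
  set ut : Fin (m+2) → F := fun i => Sum.elim u (fun _ => 0) (e.symm i) with hut
  set wt : Fin (m+2) → F := fun j => Sum.elim w (fun _ => t) (e.symm j) with hwt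
  set et : Fin (m+2) → F := fun i => Sum.elim (fun _ => (0:F)) (fun _ => 1) (e.symm i) with het
  set st : Fin (m+2) → F := fun j => g.val N j - kM N j with hst
  have hdecomp : g.val - kM = vecMulVec ut wt + vecMulVec et st := by
    ext i j
    simp only [Matrix.sub_apply, Matrix.add_apply, vecMulVec_apply, hut, hwt, het, hst]
    rcases hi : e.symm i with a | c
    · have hie : i = e (Sum.inl a) := by rw [← hi, Equiv.apply_symm_apply]
      rcases hj : e.symm j with bb | c2
      · have hje : j = e (Sum.inl bb) := by rw [← hj, Equiv.apply_symm_apply]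
        have hg : g.val i j = Gb.toBlocks₁₁ a bb := by
          rw [hie, hje, hGb]; rfl
        have hkMe : kM i j = k a bb := by
          rw [hkM, submatrix_apply, hi, hj]; rfl
        have hAk := congrFun (congrFun hk2 a) bb
        simp only [Matrix.sub_apply, vecMulVec_apply] at hAk
        rw [hg, hkMe]
        simp only [Sum.elim_inl]
        rw [hAk]
        ring
      · have hc2 : c2 = 0 := Subsingleton.elim _ _
        have hje : j = N := by rw [← heN, ← hc2, ← hj, Equiv.apply_symm_apply]
        have hg : g.val i j = Gb.toBlocks₁₂ a 0 := by
          rw [hie, hje, ← heN, hGb]; rfl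
        have hkMe : kM i j = 0 := by
          rw [hkM, submatrix_apply, hi, hj, hc2]; rfl
        rw [hg, hkMe, hk3 a]
        simp only [Sum.elim_inl, Sum.elim_inr]
        ring
    · have hc : c = 0 := Subsingleton.elim _ _
      have hie : i = N := by rw [← heN, ← hc, ← hi, Equiv.apply_symm_apply]
      simp only [Sum.elim_inr]
      rw [hie]
      ring
  have hfac : (hM * g.val) - 1 = hM * (g.val - kM) := by
    rw [Matrix.mul_sub, hmul]
  have hrank2 : ((hM * g.val) - 1).rank ≤ 2 := by
    rw [hfac]
    calc (hM * (g.val - kM)).rank ≤ (g.val - kM).rank := rank_mul_le_right _ _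
      _ = (vecMulVec ut wt + vecMulVec et st).rank := by rw [hdecomp]
      _ ≤ (vecMulVec ut wt).rank + (vecMulVec et st).rank := rank_add_le' _ _
      _ ≤ 1 + 1 := add_le_add (rank_vecMulVec_le' _ _) (rank_vecMulVec_le' _ _)
      _ = 2 := rfl
  refine ⟨⟨hM, hdethM⟩, hcol, hrow, hrank2, ?_⟩
  have hcast : ((((hM * g.val) - 1).rank : ℝ)) ≤ 2 := by exact_mod_cast hrank2
  have hpos : (0:ℝ) < ((m + 2 : ℕ) : ℝ) := by positivity
  exact div_le_div_of_nonneg_right hcast hpos.le
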